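/- Let t, u, v, w be weights on ℝ₊, Φ₁ nonnegative nondecreasing, and Φ₂ a Young function with complementary function Ψ₂. Then the weak-type modular inequality ∫_{{If > λ}} Φ₁(λ w(x)) t(x) dx ≤ ∫ Φ₂(K u(y) f(y)) v(y) dy (all f ≥ 0, all λ > 0) holds if and only if there is C > 0 such that for all λ, x > 0: ∫_0^x Ψ₂( α(λ,x) / (C λ u(y) v(y)) ) v(y) dy ≤ α(λ,x) := ∫_x^∞ Φ₁(λ w(y)) t(y) dy < ∞. -/

import Mathlib

open scoped ENNReal NNReal
open MeasureTheory Set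

/-- Generalized (right-continuous) inverse of `φ`: `φ⁻¹(s) = inf{x ≥ 0 : s ≤ φ(x)}`. -/
noncomputable def geninv (φ : ℝ → ℝ) (s : ℝ) : ℝ := sInf {x : ℝ | 0 ≤ x ∧ s ≤ φ x}

/-- The Young function `Φ(t) = ∫_0^t φ(s) ds`. -/
noncomputable def young (φ : ℝ → ℝ) (t : ℝ) : ℝ := ∫ s in (0:ℝ)..t, φ s

/-- The complementary Young function `Ψ(t) = ∫_0^t φ⁻¹(s) ds`. -/
noncomputable def coYoung (φ : ℝ → ℝ) (t : ℝ) : ℝ := ∫ s in (0:ℝ)..t, geninv φ s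

section aux
variable {φ : ℝ → ℝ}

lemma geninv_nonneg (φ : ℝ → ℝ) (s : ℝ) : 0 ≤ geninv φ s :=
  Real.sInf_nonneg (fun x hx => hx.1)

lemma geninv_bddBelow (φ : ℝ → ℝ) (s : ℝ) : BddBelow {x : ℝ | 0 ≤ x ∧ s ≤ φ x} :=
  ⟨0, fun x hx => hx.1⟩

lemma geninv_le {s ρ : ℝ} (hρ : 0 ≤ ρ) (h : s ≤ φ ρ) : geninv φ s ≤ ρ :=
  csInf_le (geninv_bddBelow φ s) ⟨hρ, h⟩

lemma lt_of_lt_geninv {s ρ : ℝ} (hρ : 0 ≤ ρ) (h : ρ < geninv φ s) : φ ρ < s := by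
  by_contra hc
  exact absurd (geninv_le hρ (not_lt.1 hc)) (not_le.2 h)

lemma geninv_set_nonempty (htop : Filter.Tendsto φ Filter.atTop Filter.atTop) (s : ℝ) :
    {x : ℝ | 0 ≤ x ∧ s ≤ φ x}.Nonempty := by
  obtain ⟨x, hx⟩ := ((htop.eventually_ge_atTop s).and (Filter.eventually_ge_atTop 0)).exists
  exact ⟨x, hx.2, hx.1⟩

lemma le_geninv (htop : Filter.Tendsto φ Filter.atTop Filter.atTop) {s ρ : ℝ}
    (h : ∀ x, 0 ≤ x → s ≤ φ x → ρ ≤ x) : ρ ≤ geninv φ s :=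
  le_csInf (geninv_set_nonempty htop s) (fun x hx => h x hx.1 hx.2)

lemma geninv_mono (hmono : Monotone φ) (htop : Filter.Tendsto φ Filter.atTop Filter.atTop) :
    Monotone (geninv φ) := by
  intro s₁ s₂ h
  apply csInf_le_csInf (geninv_bddBelow φ s₁) (geninv_set_nonempty htop s₂)
  exact fun x hx => ⟨hx.1, h.trans hx.2⟩

end aux
section aux2
variable {φ : ℝ → ℝ} (hmono : Monotone φ) (hnn : ∀ x, 0 ≤ φ x)
include hmono

include hnn in
lemma young_mono : Monotone (young φ) := by
  intro t₁ t₂ h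
  have h1 : IntervalIntegrable φ volume 0 t₁ := hmono.intervalIntegrable
  have h2 : IntervalIntegrable φ volume t₁ t₂ := hmono.intervalIntegrable
  have heq := intervalIntegral.integral_add_adjacent_intervals h1 h2
  have h3 : 0 ≤ ∫ s in t₁..t₂, φ s := intervalIntegral.integral_nonneg h (fun x _ => hnn x)
  unfold young
  linarith

omit hmono in
lemma young_zero : young φ 0 = 0 := intervalIntegral.integral_same

include hnn in
lemma ofReal_young {b : ℝ} (hb : 0 ≤ b) :
    ENNReal.ofReal (young φ b) = ∫⁻ ρ in Ioo (0:ℝ) b, ENNReal.ofReal (φ ρ) := by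
  have hInt : IntegrableOn φ (Ioc 0 b) volume :=
    (intervalIntegrable_iff_integrableOn_Ioc_of_le hb).mp hmono.intervalIntegrable
  have : young φ b = ∫ x in Ioc (0:ℝ) b, φ x := intervalIntegral.integral_of_le hb
  rw [this, MeasureTheory.ofReal_integral_eq_lintegral_ofReal hInt
    (Filter.Eventually.of_forall (fun x => hnn x))]
  exact (setLIntegral_congr Ioo_ae_eq_Ioc).symm

end aux2
section aux3
variable {φ : ℝ → ℝ}

lemma coYoung_eq_young (φ : ℝ → ℝ) : coYoung φ = young (geninv φ) := rfl

lemma coYoung_zero (φ : ℝ → ℝ) : coYoung φ 0 = 0 := young_zero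

variable (hmono : Monotone φ) (hnn : ∀ x, 0 ≤ φ x)
    (htop : Filter.Tendsto φ Filter.atTop Filter.atTop)

include hmono hnn in
lemma young_nonneg {b : ℝ} (hb : 0 ≤ b) : 0 ≤ young φ b := by
  have := young_mono hmono hnn hb
  rwa [young_zero] at this

include hmono htop in
lemma coYoung_mono : Monotone (coYoung φ) := by
  rw [coYoung_eq_young]
  exact young_mono (geninv_mono hmono htop) (geninv_nonneg φ)

include hmono htop in
lemma coYoung_nonneg {b : ℝ} (hb : 0 ≤ b) : 0 ≤ coYoung φ b := by
  rw [coYoung_eq_young]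
  exact young_nonneg (geninv_mono hmono htop) (geninv_nonneg φ) hb

include hmono htop in
lemma ofReal_coYoung {b : ℝ} (hb : 0 ≤ b) :
    ENNReal.ofReal (coYoung φ b) = ∫⁻ ρ in Ioo (0:ℝ) b, ENNReal.ofReal (geninv φ ρ) := by
  rw [coYoung_eq_young]
  exact ofReal_young (geninv_mono hmono htop) (geninv_nonneg φ) hb

-- L2
include hmono htop in
lemma coYoung_le_mul {s : ℝ} (hs : 0 ≤ s) : coYoung φ s ≤ s * geninv φ s := by
  have h1 : IntervalIntegrable (geninv φ) volume 0 s := (geninv_mono hmono htop).intervalIntegrable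
  have h2 : (∫ σ in (0:ℝ)..s, geninv φ σ) ≤ ∫ σ in (0:ℝ)..s, geninv φ s := by
    apply intervalIntegral.integral_mono_on hs h1 intervalIntegrable_const
    exact fun x hx => geninv_mono hmono htop hx.2
  simpa [coYoung, mul_comm] using h2

-- L3
include hmono hnn in
lemma young_le_mul {s b : ℝ} (hs : 0 ≤ s) (hb : 0 ≤ b) (h : b ≤ geninv φ s) :
    young φ b ≤ s * b := by
  have key : ENNReal.ofReal (young φ b) ≤ ENNReal.ofReal (s * b) := by
    rw [ofReal_young hmono hnn hb]
    calc ∫⁻ ρ in Ioo (0:ℝ) b, ENNReal.ofReal (φ ρ)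
        ≤ ∫⁻ _ in Ioo (0:ℝ) b, ENNReal.ofReal s := by
          apply lintegral_mono_ae
          rw [ae_restrict_iff' measurableSet_Ioo]
          refine Filter.Eventually.of_forall fun ρ hρ => ENNReal.ofReal_le_ofReal ?_
          exact (lt_of_lt_geninv hρ.1.le (lt_of_lt_of_le hρ.2 h)).le
      _ = ENNReal.ofReal s * volume (Ioo (0:ℝ) b) := setLIntegral_const _ _
      _ = ENNReal.ofReal s * ENNReal.ofReal b := by rw [Real.volume_Ioo, sub_zero]
      _ = ENNReal.ofReal (s * b) := (ENNReal.ofReal_mul hs).symm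
  exact (ENNReal.ofReal_le_ofReal_iff (by positivity)).mp key

omit hmono hnn htop in
lemma indicator_slice {c b : ℝ} (hc : 0 ≤ c) :
    ∫⁻ ρ in Ioo (0:ℝ) b, (if ρ ≤ c then (1:ℝ≥0∞) else 0) ≤ ENNReal.ofReal c := by
  have h1 : (fun ρ : ℝ => if ρ ≤ c then (1:ℝ≥0∞) else 0)
      = (Iic c).indicator (fun _ => (1:ℝ≥0∞)) := by
    funext ρ; by_cases h : ρ ≤ c <;> simp [indicator, h]
  rw [h1, lintegral_indicator measurableSet_Iic, setLIntegral_one,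
    Measure.restrict_apply measurableSet_Iic]
  calc volume (Iic c ∩ Ioo (0:ℝ) b) ≤ volume (Ioc (0:ℝ) c) := by
        apply measure_mono
        rintro ρ ⟨hρ1, hρ2⟩
        exact ⟨hρ2.1, hρ1⟩
    _ = ENNReal.ofReal c := by rw [Real.volume_Ioc, sub_zero]

-- L1 (Young's inequality)
include hmono hnn htop in
lemma young_ineq {a b : ℝ} (ha : 0 ≤ a) (hb : 0 ≤ b) :
    a * b ≤ coYoung φ a + young φ b := by
  have hφm : Measurable φ := hmono.measurable
  have hgm : Measurable (geninv φ) := (geninv_mono hmono htop).measurable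
  have key : ENNReal.ofReal a * ENNReal.ofReal b
      ≤ ENNReal.ofReal (coYoung φ a) + ENNReal.ofReal (young φ b) := by
    have step0 : ENNReal.ofReal a * ENNReal.ofReal b
        = ∫⁻ σ in Ioo (0:ℝ) a, ∫⁻ _ρ in Ioo (0:ℝ) b, (1:ℝ≥0∞) := by
      simp only [setLIntegral_one, Real.volume_Ioo, sub_zero, setLIntegral_const]
      ring
    have h1meas : Measurable (Function.uncurry
        (fun σ ρ : ℝ => if σ ≤ φ ρ then (1:ℝ≥0∞) else 0)) := by
      apply Measurable.ite _ measurable_const measurable_const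
      exact measurableSet_le measurable_fst (hφm.comp measurable_snd)
    have step1 : (∫⁻ σ in Ioo (0:ℝ) a, ∫⁻ ρ in Ioo (0:ℝ) b, (1:ℝ≥0∞))
        ≤ (∫⁻ σ in Ioo (0:ℝ) a, ∫⁻ ρ in Ioo (0:ℝ) b,
            ((if σ ≤ φ ρ then (1:ℝ≥0∞) else 0) + (if ρ ≤ geninv φ σ then (1:ℝ≥0∞) else 0))) := by
      apply lintegral_mono_ae
      rw [ae_restrict_iff' measurableSet_Ioo]
      refine Filter.Eventually.of_forall fun σ hσ => ?_
      apply lintegral_mono_ae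
      rw [ae_restrict_iff' measurableSet_Ioo]
      refine Filter.Eventually.of_forall fun ρ hρ => ?_
      by_cases hc : σ ≤ φ ρ
      · simp [hc]
      · have : ρ ≤ geninv φ σ := by
          apply le_geninv htop
          intro x hx hsx
          by_contra hxρ
          exact hc (le_trans hsx (hmono (not_le.1 hxρ).le))
        simp [hc, this]
    have step2 : (∫⁻ σ in Ioo (0:ℝ) a, ∫⁻ ρ in Ioo (0:ℝ) b,
            ((if σ ≤ φ ρ then (1:ℝ≥0∞) else 0) + (if ρ ≤ geninv φ σ then (1:ℝ≥0∞) else 0)))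
        = (∫⁻ σ in Ioo (0:ℝ) a, ∫⁻ ρ in Ioo (0:ℝ) b, (if σ ≤ φ ρ then (1:ℝ≥0∞) else 0))
          + (∫⁻ σ in Ioo (0:ℝ) a, ∫⁻ ρ in Ioo (0:ℝ) b, (if ρ ≤ geninv φ σ then (1:ℝ≥0∞) else 0)) := by
      have hinner : ∀ σ : ℝ, (∫⁻ ρ in Ioo (0:ℝ) b,
          ((if σ ≤ φ ρ then (1:ℝ≥0∞) else 0) + (if ρ ≤ geninv φ σ then (1:ℝ≥0∞) else 0)))
          = (∫⁻ ρ in Ioo (0:ℝ) b, (if σ ≤ φ ρ then (1:ℝ≥0∞) else 0))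
            + (∫⁻ ρ in Ioo (0:ℝ) b, (if ρ ≤ geninv φ σ then (1:ℝ≥0∞) else 0)) := by
        intro σ
        apply lintegral_add_left
        exact Measurable.ite (hφm measurableSet_Ici) measurable_const measurable_const
      simp only [hinner]
      apply lintegral_add_left
      exact (Measurable.lintegral_prod_right h1meas)
    have term1 : (∫⁻ σ in Ioo (0:ℝ) a, ∫⁻ ρ in Ioo (0:ℝ) b, (if σ ≤ φ ρ then (1:ℝ≥0∞) else 0))
        ≤ ENNReal.ofReal (young φ b) := by
      rw [lintegral_lintegral_swap h1meas.aemeasurable]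
      rw [ofReal_young hmono hnn hb]
      apply lintegral_mono_ae
      rw [ae_restrict_iff' measurableSet_Ioo]
      refine Filter.Eventually.of_forall fun ρ hρ => ?_
      exact indicator_slice (hnn ρ)
    have term2 : (∫⁻ σ in Ioo (0:ℝ) a, ∫⁻ ρ in Ioo (0:ℝ) b, (if ρ ≤ geninv φ σ then (1:ℝ≥0∞) else 0))
        ≤ ENNReal.ofReal (coYoung φ a) := by
      rw [ofReal_coYoung hmono htop ha]
      apply lintegral_mono_ae
      rw [ae_restrict_iff' measurableSet_Ioo]
      refine Filter.Eventually.of_forall fun σ hσ => ?_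
      exact indicator_slice (geninv_nonneg φ σ)
    calc ENNReal.ofReal a * ENNReal.ofReal b
        ≤ (∫⁻ σ in Ioo (0:ℝ) a, ∫⁻ ρ in Ioo (0:ℝ) b, (if σ ≤ φ ρ then (1:ℝ≥0∞) else 0))
          + (∫⁻ σ in Ioo (0:ℝ) a, ∫⁻ ρ in Ioo (0:ℝ) b, (if ρ ≤ geninv φ σ then (1:ℝ≥0∞) else 0)) := by
          rw [step0]; rw [step2] at step1; exact step1
      _ ≤ ENNReal.ofReal (young φ b) + ENNReal.ofReal (coYoung φ a) := add_le_add term1 term2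
      _ = ENNReal.ofReal (coYoung φ a) + ENNReal.ofReal (young φ b) := add_comm _ _
  rw [← ENNReal.ofReal_mul ha, ← ENNReal.ofReal_add
    (coYoung_nonneg hmono htop ha) (young_nonneg hmono hnn hb)] at key
  exact (ENNReal.ofReal_le_ofReal_iff (add_nonneg (coYoung_nonneg hmono htop ha)
    (young_nonneg hmono hnn hb))).mp key

end aux3


theorem stmt15 (t u v w : ℝ → ℝ)
    (ht : Measurable t) (hu : Measurable u) (hv : Measurable v) (hw : Measurable w)
    (hpos : ∀ x > (0:ℝ), 0 < t x ∧ 0 < u x ∧ 0 < v x ∧ 0 < w x)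
    (Φ₁ : ℝ → ℝ) (hΦ₁mono : MonotoneOn Φ₁ (Ioi 0)) (hΦ₁nn : ∀ x, 0 ≤ Φ₁ x)
    (φ₂ : ℝ → ℝ) (hφ₂mono : Monotone φ₂) (hφ₂nn : ∀ x, 0 ≤ φ₂ x) (hφ₂0 : φ₂ 0 = 0)
    (hφ₂0plus : Filter.Tendsto φ₂ (nhdsWithin 0 (Ioi 0)) (nhds 0))
    (hφ₂top : Filter.Tendsto φ₂ Filter.atTop Filter.atTop) :
    (∃ K > (0:ℝ), ∀ f : ℝ → ℝ, Measurable f → (∀ y, 0 ≤ f y) → ∀ lam > (0:ℝ),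
        ∫⁻ x in {x : ℝ | x ∈ Ioi (0:ℝ) ∧
            ENNReal.ofReal lam < ∫⁻ y in Ioo (0:ℝ) x, ENNReal.ofReal (f y)},
            ENNReal.ofReal (Φ₁ (lam * w x) * t x) ≤
          ∫⁻ y in Ioi (0:ℝ), ENNReal.ofReal (young φ₂ (K * u y * f y) * v y)) ↔
    (∃ C > (0:ℝ), ∀ lam > (0:ℝ), ∀ x > (0:ℝ),
        (∫⁻ y in Ioi x, ENNReal.ofReal (Φ₁ (lam * w y) * t y)) < ⊤ ∧
        ∫⁻ y in Ioo (0:ℝ) x,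
            ENNReal.ofReal (coYoung φ₂
              ((∫⁻ z in Ioi x, ENNReal.ofReal (Φ₁ (lam * w z) * t z)).toReal /
                (C * lam * u y * v y)) * v y) ≤
          ∫⁻ y in Ioi x, ENNReal.ofReal (Φ₁ (lam * w y) * t y)) := by
  constructor
  · -- necessity
    rintro ⟨K, hK, hweak⟩
    refine ⟨3 * K, by positivity, fun lam hlam x hx => ?_⟩
    set α := ∫⁻ y in Ioi x, ENNReal.ofReal (Φ₁ (lam * w y) * t y) with hα
    -- Step (i): finiteness of α
    have hαfin : α < ⊤ := by
      set S : ℕ → Set ℝ := fun M => Ioo (x/2) x ∩ {y | u y ≤ M ∧ v y ≤ M} with hS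
      have hSmeas : ∀ M, MeasurableSet (S M) :=
        fun M => measurableSet_Ioo.inter ((measurableSet_le hu measurable_const).inter
          (measurableSet_le hv measurable_const))
      have hSsub : ∀ M, S M ⊆ Ioo (x/2) x := fun M => inter_subset_left
      have hSunion : (⋃ M, S M) = Ioo (x/2) x := by
        apply Subset.antisymm (iUnion_subset hSsub)
        intro y hy
        obtain ⟨M, hM⟩ := exists_nat_ge (max (u y) (v y))
        exact mem_iUnion.mpr ⟨M, hy, le_trans (le_max_left _ _) hM,
          le_trans (le_max_right _ _) hM⟩
      have hvolpos : (0:ℝ≥0∞) < volume (Ioo (x/2) x) := by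
        rw [Real.volume_Ioo]
        apply ENNReal.ofReal_pos.mpr
        linarith
      have hMex : ∃ M, volume (S M) ≠ 0 := by
        by_contra h
        push_neg at h
        have h0 : volume (⋃ M, S M) = 0 := measure_iUnion_null_iff.mpr h
        rw [hSunion] at h0
        exact absurd h0 (ne_of_gt hvolpos)
      obtain ⟨M, hM⟩ := hMex
      have hSfin : volume (S M) < ⊤ :=
        lt_of_le_of_lt (measure_mono (hSsub M)) (by rw [Real.volume_Ioo]; exact ENNReal.ofReal_lt_top)
      set ℓ := (volume (S M)).toReal with hℓ
      have hℓpos : 0 < ℓ := ENNReal.toReal_pos hM hSfin.ne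
      have hvolS : volume (S M) = ENNReal.ofReal ℓ := (ENNReal.ofReal_toReal hSfin.ne).symm
      set f₁ : ℝ → ℝ := fun y => if y ∈ S M then 2*lam/ℓ else 0 with hf₁
      have hf₁m : Measurable f₁ := Measurable.ite (hSmeas M) measurable_const measurable_const
      have hf₁nn : ∀ y, 0 ≤ f₁ y := by
        intro y
        by_cases h : y ∈ S M <;> simp only [hf₁, h, if_true, if_false, le_refl]
        positivity
      have hind : (fun y => ENNReal.ofReal (f₁ y))
          = (S M).indicator (fun _ => ENNReal.ofReal (2*lam/ℓ)) := by
        funext y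
        by_cases h : y ∈ S M <;>
          simp [hf₁, h, indicator]
      have hsub : Ioi x ⊆ {z : ℝ | z ∈ Ioi (0:ℝ) ∧
          ENNReal.ofReal lam < ∫⁻ y in Ioo (0:ℝ) z, ENNReal.ofReal (f₁ y)} := by
        intro z hz
        have hz0 : (0:ℝ) < z := lt_trans hx hz
        refine ⟨hz0, ?_⟩
        have hSz : S M ∩ Ioo 0 z = S M := by
          apply inter_eq_left.mpr
          intro y hy
          have := hSsub M hy
          exact ⟨by linarith [this.1], by linarith [this.2, (mem_Ioi.mp hz)]⟩
        rw [hind, lintegral_indicator (hSmeas M), Measure.restrict_restrict (hSmeas M),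
          setLIntegral_const, hSz, hvolS, ← ENNReal.ofReal_mul (by positivity),
          div_mul_cancel₀ _ (ne_of_gt hℓpos)]
        exact ENNReal.ofReal_lt_ofReal_iff (by positivity) |>.mpr (by linarith)
      have hB : ∀ y, ENNReal.ofReal (young φ₂ (K * u y * f₁ y) * v y) ≤
          (S M).indicator (fun _ => ENNReal.ofReal (young φ₂ (K * M * (2*lam/ℓ)) * M)) y := by
        intro y
        by_cases h : y ∈ S M
        · have hy := hSsub M h
          have hy0 : (0:ℝ) < y := by linarith [hy.1]
          obtain ⟨-, huy, hvy, -⟩ := hpos y hy0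
          simp only [hf₁, h, if_true, indicator_of_mem]
          apply ENNReal.ofReal_le_ofReal
          apply mul_le_mul
          · apply young_mono hφ₂mono hφ₂nn
            have huM : u y ≤ M := h.2.1
            exact mul_le_mul_of_nonneg_right (mul_le_mul_of_nonneg_left huM hK.le)
              (by positivity)
          · exact h.2.2
          · exact hvy.le
          · exact young_nonneg hφ₂mono hφ₂nn (by positivity)
        · simp only [hf₁, h, if_false, indicator_of_notMem, mul_zero, young_zero, zero_mul,
            ENNReal.ofReal_zero]
          exact zero_le
      calc α ≤ ∫⁻ z in {z : ℝ | z ∈ Ioi (0:ℝ) ∧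
              ENNReal.ofReal lam < ∫⁻ y in Ioo (0:ℝ) z, ENNReal.ofReal (f₁ y)},
              ENNReal.ofReal (Φ₁ (lam * w z) * t z) := lintegral_mono_set hsub
        _ ≤ ∫⁻ y in Ioi (0:ℝ), ENNReal.ofReal (young φ₂ (K * u y * f₁ y) * v y) :=
            hweak f₁ hf₁m hf₁nn lam hlam
        _ ≤ ∫⁻ y in Ioi (0:ℝ),
              (S M).indicator (fun _ => ENNReal.ofReal (young φ₂ (K * M * (2*lam/ℓ)) * M)) y :=
            lintegral_mono hB
        _ ≤ ∫⁻ y, (S M).indicator (fun _ => ENNReal.ofReal (young φ₂ (K * M * (2*lam/ℓ)) * M)) y :=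
            setLIntegral_le_lintegral _ _
        _ = ENNReal.ofReal (young φ₂ (K * M * (2*lam/ℓ)) * M) * volume (S M) := by
            rw [lintegral_indicator (hSmeas M), setLIntegral_const]
        _ < ⊤ := ENNReal.mul_lt_top ENNReal.ofReal_lt_top hSfin
    refine ⟨hαfin, ?_⟩
    -- Step (ii)
    set αr := α.toReal with hαr
    by_cases hα0 : α = 0
    · have : ∀ y, ENNReal.ofReal (coYoung φ₂ (αr / (3*K*lam*u y*v y)) * v y) = 0 := by
        intro y
        rw [hαr, hα0]
        simp [coYoung_zero]
      calc (∫⁻ y in Ioo (0:ℝ) x, ENNReal.ofReal (coYoung φ₂ (αr / (3*K*lam*u y*v y)) * v y))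
          = ∫⁻ _y in Ioo (0:ℝ) x, (0:ℝ≥0∞) := by
            apply lintegral_congr
            intro y
            exact this y
        _ = 0 := lintegral_zero
        _ ≤ α := zero_le
    have hαpos : 0 < αr := ENNReal.toReal_pos hα0 hαfin.ne
    have hαof : ENNReal.ofReal αr = α := ENNReal.ofReal_toReal hαfin.ne
    set s : ℝ → ℝ := fun y => αr / (3*K*lam*u y*v y) with hsdef
    have hsm : Measurable s := measurable_const.div (((measurable_const.mul hu).mul hv))
    set f₀ : ℝ → ℝ := fun y => if y ∈ Ioo (0:ℝ) x then geninv φ₂ (s y) / (K * u y) else 0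
      with hf₀
    have hf₀m : Measurable f₀ := by
      apply Measurable.ite measurableSet_Ioo _ measurable_const
      exact ((geninv_mono hφ₂mono hφ₂top).measurable.comp hsm).div (measurable_const.mul hu)
    have hf₀nn : ∀ y, 0 ≤ f₀ y := by
      intro y
      by_cases h : y ∈ Ioo (0:ℝ) x <;> simp only [hf₀, h, if_true, if_false, le_refl]
      exact div_nonneg (geninv_nonneg _ _) (mul_nonneg hK.le (hpos y h.1).2.1.le)
    have hsnn : ∀ y ∈ Ioo (0:ℝ) x, 0 ≤ s y := by
      intro y hy
      obtain ⟨-, huy, hvy, -⟩ := hpos y hy.1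
      have := hαpos
      show 0 ≤ αr / (3*K*lam*u y*v y)
      positivity
    set D := ∫⁻ y in Ioo (0:ℝ) x, ENNReal.ofReal (f₀ y) with hD
    by_cases hDle : D ≤ ENNReal.ofReal lam
    · -- Branch 1
      have hpt : ∀ y ∈ Ioo (0:ℝ) x,
          ENNReal.ofReal (coYoung φ₂ (s y) * v y) ≤ ENNReal.ofReal ((αr/(3*lam)) * f₀ y) := by
        intro y hy
        obtain ⟨-, huy, hvy, -⟩ := hpos y hy.1
        apply ENNReal.ofReal_le_ofReal
        have h1 : coYoung φ₂ (s y) ≤ s y * geninv φ₂ (s y) :=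
          coYoung_le_mul hφ₂mono hφ₂top (hsnn y hy)
        have h2 : coYoung φ₂ (s y) * v y ≤ s y * geninv φ₂ (s y) * v y :=
          mul_le_mul_of_nonneg_right h1 hvy.le
        refine le_trans h2 (le_of_eq ?_)
        simp only [hf₀, hy, if_true, hsdef]
        field_simp
      calc (∫⁻ y in Ioo (0:ℝ) x, ENNReal.ofReal (coYoung φ₂ (s y) * v y))
          ≤ ∫⁻ y in Ioo (0:ℝ) x, ENNReal.ofReal ((αr/(3*lam)) * f₀ y) := by
            apply lintegral_mono_ae
            refine (ae_restrict_iff' measurableSet_Ioo).mpr ?_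
            exact Filter.Eventually.of_forall hpt
        _ = ENNReal.ofReal (αr/(3*lam)) * D := by
            rw [hD, ← lintegral_const_mul' _ _ ENNReal.ofReal_ne_top]
            congr 1
            funext y
            rw [← ENNReal.ofReal_mul (by positivity)]
        _ ≤ ENNReal.ofReal (αr/(3*lam)) * ENNReal.ofReal lam :=
            mul_le_mul_right hDle _
        _ = ENNReal.ofReal (αr/3) := by
            rw [← ENNReal.ofReal_mul (by positivity)]
            congr 1
            field_simp
        _ ≤ α := by
            rw [← hαof]
            exact ENNReal.ofReal_le_ofReal (by linarith)
    · -- Branch 2 : contradiction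
      exfalso
      push_neg at hDle
      have hNex : ∃ N : ℕ, ENNReal.ofReal lam
          < ∫⁻ y in Ioo (0:ℝ) x, ENNReal.ofReal (min (f₀ y) N) := by
        by_contra hcon
        push_neg at hcon
        have hsup : (⨆ N : ℕ, ∫⁻ y in Ioo (0:ℝ) x, ENNReal.ofReal (min (f₀ y) N)) = D := by
          rw [hD, ← lintegral_iSup]
          · apply lintegral_congr
            intro y
            apply le_antisymm
            · exact iSup_le fun n => ENNReal.ofReal_le_ofReal (min_le_left _ _)
            · obtain ⟨N, hN⟩ := exists_nat_ge (f₀ y)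
              exact le_iSup_of_le N (by rw [min_eq_left hN])
          · exact fun n => (hf₀m.min measurable_const).ennreal_ofReal
          · intro n m hnm y
            exact ENNReal.ofReal_le_ofReal (min_le_min le_rfl (by exact_mod_cast Nat.cast_le.mpr hnm))
        have : D ≤ ENNReal.ofReal lam := by rw [← hsup]; exact iSup_le hcon
        exact absurd this (not_le.mpr hDle)
      obtain ⟨N, hN⟩ := hNex
      set F : ℝ → ℝ≥0∞ := fun b => ∫⁻ y in Ioo (0:ℝ) b, ENNReal.ofReal (min (f₀ y) N) with hF
      have hFle : ∀ b : ℝ, F b ≤ ENNReal.ofReal N * volume (Ioo (0:ℝ) b) := by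
        intro b
        calc F b ≤ ∫⁻ _y in Ioo (0:ℝ) b, ENNReal.ofReal N := by
              apply lintegral_mono_ae
              refine (ae_restrict_iff' measurableSet_Ioo).mpr ?_
              refine Filter.Eventually.of_forall fun y _ => ?_
              exact ENNReal.ofReal_le_ofReal (min_le_right _ _)
          _ = ENNReal.ofReal N * volume (Ioo (0:ℝ) b) := setLIntegral_const _ _
      have hFfin : ∀ b : ℝ, F b ≠ ⊤ := by
        intro b
        refine ne_of_lt (lt_of_le_of_lt (hFle b) ?_)
        rw [Real.volume_Ioo]
        exact ENNReal.mul_lt_top ENNReal.ofReal_lt_top ENNReal.ofReal_lt_top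
      have hFmono : ∀ b₁ b₂ : ℝ, b₁ ≤ b₂ → F b₁ ≤ F b₂ :=
        fun b₁ b₂ h => lintegral_mono_set (Ioo_subset_Ioo_right h)
      have hFlip : ∀ b₁ b₂ : ℝ, b₁ ≤ b₂ →
          F b₂ ≤ F b₁ + ENNReal.ofReal N * ENNReal.ofReal (b₂ - b₁) := by
        intro b₁ b₂ h
        have hsub2 : Ioo (0:ℝ) b₂ ⊆ Ioo (0:ℝ) b₁ ∪ Ico b₁ b₂ := by
          intro z hz
          by_cases hzb : z < b₁
          · exact Or.inl ⟨hz.1, hzb⟩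
          · exact Or.inr ⟨not_lt.mp hzb, hz.2⟩
        calc F b₂ ≤ ∫⁻ y in Ioo (0:ℝ) b₁ ∪ Ico b₁ b₂, ENNReal.ofReal (min (f₀ y) N) :=
              lintegral_mono_set hsub2
          _ ≤ F b₁ + ∫⁻ y in Ico b₁ b₂, ENNReal.ofReal (min (f₀ y) N) :=
              lintegral_union_le _ _ _
          _ ≤ F b₁ + ENNReal.ofReal N * ENNReal.ofReal (b₂ - b₁) := by
              apply add_le_add_right
              calc (∫⁻ y in Ico b₁ b₂, ENNReal.ofReal (min (f₀ y) N))
                  ≤ ∫⁻ _y in Ico b₁ b₂, ENNReal.ofReal N := by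
                    apply lintegral_mono_ae
                    refine (ae_restrict_iff' measurableSet_Ico).mpr ?_
                    exact Filter.Eventually.of_forall fun y _ =>
                      ENNReal.ofReal_le_ofReal (min_le_right _ _)
                _ = ENNReal.ofReal N * volume (Ico b₁ b₂) := setLIntegral_const _ _
                _ ≤ _ := by
                    rw [Real.volume_Ico]
      set Fr : ℝ → ℝ := fun b => (F b).toReal with hFr
      have hFrmono : ∀ b₁ b₂ : ℝ, b₁ ≤ b₂ → Fr b₁ ≤ Fr b₂ :=
        fun b₁ b₂ h => ENNReal.toReal_mono (hFfin b₂) (hFmono b₁ b₂ h)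
      have hFrlip : ∀ b₁ b₂ : ℝ, b₁ ≤ b₂ → Fr b₂ - Fr b₁ ≤ N * (b₂ - b₁) := by
        intro b₁ b₂ h
        have h1 := hFlip b₁ b₂ h
        have h2 : (F b₂).toReal ≤ (F b₁ + ENNReal.ofReal N * ENNReal.ofReal (b₂ - b₁)).toReal := by
          apply ENNReal.toReal_mono _ h1
          exact ENNReal.add_ne_top.mpr ⟨hFfin b₁,
            (ENNReal.mul_lt_top ENNReal.ofReal_lt_top ENNReal.ofReal_lt_top).ne⟩
        rw [ENNReal.toReal_add (hFfin b₁)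
          (ENNReal.mul_lt_top ENNReal.ofReal_lt_top ENNReal.ofReal_lt_top).ne,
          ENNReal.toReal_mul, ENNReal.toReal_ofReal (Nat.cast_nonneg N),
          ENNReal.toReal_ofReal (by linarith)] at h2
        show (F b₂).toReal - (F b₁).toReal ≤ (N:ℝ) * (b₂ - b₁)
        linarith
      have hFrcont : Continuous Fr := by
        have : LipschitzWith (N : ℝ≥0) Fr := by
          apply LipschitzWith.of_dist_le_mul
          intro b₁ b₂
          rw [Real.dist_eq, Real.dist_eq]
          rcases le_total b₁ b₂ with h | h
          · rw [abs_of_nonpos (by linarith [hFrmono b₁ b₂ h]), abs_of_nonpos (by linarith)]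
            have := hFrlip b₁ b₂ h
            push_cast
            linarith
          · rw [abs_of_nonneg (by linarith [hFrmono b₂ b₁ h]), abs_of_nonneg (by linarith)]
            have := hFrlip b₂ b₁ h
            push_cast
            linarith
        exact this.continuous
      obtain ⟨b, hbmem, hFb_gt, hFb_le⟩ :
          ∃ b : ℝ, b ≤ x ∧ ENNReal.ofReal lam < F b ∧ F b ≤ ENNReal.ofReal (2*lam) := by
        by_cases hFx : F x ≤ ENNReal.ofReal (2*lam)
        · exact ⟨x, le_refl x, hN, hFx⟩
        · push_neg at hFx
          have hFr0 : Fr 0 = 0 := by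
            simp only [hFr, hF, Ioo_self, Measure.restrict_empty, lintegral_zero_measure,
              ENNReal.toReal_zero]
          have hFrx : 2*lam ≤ Fr x := by
            have : (ENNReal.ofReal (2*lam)).toReal ≤ (F x).toReal :=
              ENNReal.toReal_mono (hFfin x) hFx.le
            rwa [ENNReal.toReal_ofReal (by linarith)] at this
          have hmem : (3/2*lam) ∈ Icc (Fr 0) (Fr x) := by
            rw [hFr0]
            constructor <;> [positivity; linarith]
          obtain ⟨b, hb, hFrb⟩ := intermediate_value_Icc (le_of_lt hx) hFrcont.continuousOn hmem
          refine ⟨b, hb.2, ?_, ?_⟩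
          · have : F b = ENNReal.ofReal (3/2*lam) := by
              rw [← hFrb]
              exact (ENNReal.ofReal_toReal (hFfin b)).symm
            rw [this]
            exact ENNReal.ofReal_lt_ofReal_iff (by positivity) |>.mpr (by linarith)
          · have : F b = ENNReal.ofReal (3/2*lam) := by
              rw [← hFrb]
              exact (ENNReal.ofReal_toReal (hFfin b)).symm
            rw [this]
            exact ENNReal.ofReal_le_ofReal (by linarith)
      set gg : ℝ → ℝ := fun y => if y ∈ Ioo (0:ℝ) b then min (f₀ y) N else 0 with hgg
      have hggm : Measurable gg :=
        Measurable.ite measurableSet_Ioo (hf₀m.min measurable_const) measurable_const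
      have hggnn : ∀ y, 0 ≤ gg y := by
        intro y
        simp only [hgg]
        split_ifs with h
        · exact le_min (hf₀nn y) (Nat.cast_nonneg N)
        · exact le_rfl
      have hggind : (fun y => ENNReal.ofReal (gg y))
          = (Ioo (0:ℝ) b).indicator (fun y => ENNReal.ofReal (min (f₀ y) N)) := by
        funext y
        simp only [hgg]
        by_cases h : y ∈ Ioo (0:ℝ) b
        · rw [if_pos h, indicator_of_mem h]
        · rw [if_neg h, indicator_of_notMem h, ENNReal.ofReal_zero]
      have hggint : ∀ z : ℝ, b ≤ z →
          (∫⁻ y in Ioo (0:ℝ) z, ENNReal.ofReal (gg y)) = F b := by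
        intro z hz
        rw [hggind, lintegral_indicator measurableSet_Ioo,
          Measure.restrict_restrict measurableSet_Ioo,
          inter_eq_left.mpr (Ioo_subset_Ioo_right hz)]
      have hsub : Ioi x ⊆ {z : ℝ | z ∈ Ioi (0:ℝ) ∧
          ENNReal.ofReal lam < ∫⁻ y in Ioo (0:ℝ) z, ENNReal.ofReal (gg y)} := by
        intro z hz
        have hz0 : (0:ℝ) < z := lt_trans hx hz
        refine ⟨hz0, ?_⟩
        rw [hggint z (le_trans hbmem (le_of_lt hz))]
        exact hFb_gt
      have hptg : ∀ y : ℝ, y ∈ Ioi (0:ℝ) → ENNReal.ofReal (young φ₂ (K * u y * gg y) * v y)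
          ≤ ENNReal.ofReal ((αr/(3*lam)) * gg y) := by
        intro y _
        by_cases h : y ∈ Ioo (0:ℝ) b
        · have hyx : y ∈ Ioo (0:ℝ) x := ⟨h.1, lt_of_lt_of_le h.2 hbmem⟩
          obtain ⟨-, huy, hvy, -⟩ := hpos y h.1
          apply ENNReal.ofReal_le_ofReal
          have hggle : gg y ≤ f₀ y := by
            simp only [hgg, h, if_true, hf₀, hyx]
            exact min_le_left _ _
          have harg : K * u y * gg y ≤ geninv φ₂ (s y) := by
            have : K * u y * f₀ y = geninv φ₂ (s y) := by
              simp only [hf₀, hyx, if_true]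
              field_simp
            rw [← this]
            have : 0 ≤ K * u y := by positivity
            nlinarith
          have hargnn : 0 ≤ K * u y * gg y := by
            have := hggnn y
            positivity
          have hYle : young φ₂ (K * u y * gg y) ≤ s y * (K * u y * gg y) :=
            young_le_mul hφ₂mono hφ₂nn (hsnn y hyx) hargnn harg
          have h2 : young φ₂ (K * u y * gg y) * v y ≤ s y * (K * u y * gg y) * v y :=
            mul_le_mul_of_nonneg_right hYle hvy.le
          refine le_trans h2 (le_of_eq ?_)
          simp only [hsdef]
          field_simp
        · simp only [hgg, h, if_false, mul_zero, young_zero, zero_mul, ENNReal.ofReal_zero]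
          exact zero_le
      have hcontr : α ≤ ENNReal.ofReal (2*αr/3) := by
        calc α ≤ ∫⁻ z in {z : ℝ | z ∈ Ioi (0:ℝ) ∧
                ENNReal.ofReal lam < ∫⁻ y in Ioo (0:ℝ) z, ENNReal.ofReal (gg y)},
                ENNReal.ofReal (Φ₁ (lam * w z) * t z) := lintegral_mono_set hsub
          _ ≤ ∫⁻ y in Ioi (0:ℝ), ENNReal.ofReal (young φ₂ (K * u y * gg y) * v y) :=
              hweak gg hggm hggnn lam hlam
          _ ≤ ∫⁻ y in Ioi (0:ℝ), ENNReal.ofReal ((αr/(3*lam)) * gg y) := by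
              apply lintegral_mono_ae
              refine (ae_restrict_iff' measurableSet_Ioi).mpr ?_
              exact Filter.Eventually.of_forall hptg
          _ = ENNReal.ofReal (αr/(3*lam)) * ∫⁻ y in Ioi (0:ℝ), ENNReal.ofReal (gg y) := by
              rw [← lintegral_const_mul' _ _ ENNReal.ofReal_ne_top]
              congr 1
              funext y
              rw [← ENNReal.ofReal_mul (by positivity)]
          _ = ENNReal.ofReal (αr/(3*lam)) * F b := by
              congr 1
              rw [hggind, lintegral_indicator measurableSet_Ioo,
                Measure.restrict_restrict measurableSet_Ioo,
                (inter_eq_left.mpr (Ioo_subset_Ioi_self : Ioo (0:ℝ) b ⊆ Ioi 0))]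
          _ ≤ ENNReal.ofReal (αr/(3*lam)) * ENNReal.ofReal (2*lam) :=
              mul_le_mul_right hFb_le _
          _ = ENNReal.ofReal (2*αr/3) := by
              rw [← ENNReal.ofReal_mul (by positivity)]
              congr 1
              field_simp
      have : α < α := by
        calc α ≤ ENNReal.ofReal (2*αr/3) := hcontr
          _ < ENNReal.ofReal αr := ENNReal.ofReal_lt_ofReal_iff hαpos |>.mpr (by linarith)
          _ = α := hαof
      exact absurd this (lt_irrefl α)
  · -- sufficiency
    rintro ⟨C, hC, hcond⟩
    refine ⟨2 * C, by positivity, fun f hf hfnn lam hlam => ?_⟩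
    have hlam' : (0:ℝ≥0∞) < ENNReal.ofReal lam := ENNReal.ofReal_pos.mpr hlam
    set G : ℝ → ℝ≥0∞ := fun x => ∫⁻ y in Ioo (0:ℝ) x, ENNReal.ofReal (f y) with hG
    set g : ℝ → ℝ≥0∞ := fun z => ENNReal.ofReal (Φ₁ (lam * w z) * t z) with hgdef
    set R := ∫⁻ y in Ioi (0:ℝ), ENNReal.ofReal (young φ₂ (2 * C * u y * f y) * v y) with hR
    -- main per-x claim
    have claimA : ∀ x : ℝ, 0 < x → ENNReal.ofReal lam < G x → (∫⁻ z in Ioi x, g z) ≤ R := by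
      intro x hx0 hxG
      obtain ⟨hfin, hΨ⟩ := hcond lam hlam x hx0
      set α := ∫⁻ z in Ioi x, g z with hα
      by_cases hα0 : α = 0
      · rw [hα0]; exact zero_le
      have hαtop : α ≠ ⊤ := hfin.ne
      set αr := α.toReal with hαr
      have hαpos : 0 < αr := ENNReal.toReal_pos hα0 hαtop
      have hpt : ∀ y ∈ Ioo (0:ℝ) x, ENNReal.ofReal ((2*αr/lam) * f y) ≤
          ENNReal.ofReal (coYoung φ₂ (αr / (C*lam*u y*v y)) * v y) +
          ENNReal.ofReal (young φ₂ (2 * C * u y * f y) * v y) := by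
        intro y hy
        obtain ⟨-, huy, hvy, -⟩ := hpos y hy.1
        have hs : 0 ≤ αr / (C*lam*u y*v y) := by positivity
        have hb : 0 ≤ 2 * C * u y * f y := mul_nonneg (by positivity) (hfnn y)
        have hY := young_ineq hφ₂mono hφ₂nn hφ₂top hs hb
        have h2 : (αr / (C*lam*u y*v y)) * (2*C*u y*f y) * v y ≤
            coYoung φ₂ (αr / (C*lam*u y*v y)) * v y +
              young φ₂ (2*C*u y*f y) * v y := by
          have := mul_le_mul_of_nonneg_right hY hvy.le
          nlinarith [this]
        have h3 : (2*αr/lam) * f y = (αr / (C*lam*u y*v y)) * (2*C*u y*f y) * v y := by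
          field_simp
        rw [h3]
        refine le_trans (ENNReal.ofReal_le_ofReal h2) ?_
        rw [ENNReal.ofReal_add (mul_nonneg (coYoung_nonneg hφ₂mono hφ₂top hs) hvy.le)
          (mul_nonneg (young_nonneg hφ₂mono hφ₂nn hb) hvy.le)]
      have hmeas1 : Measurable fun y =>
          ENNReal.ofReal (coYoung φ₂ (αr / (C*lam*u y*v y)) * v y) := by
        apply Measurable.ennreal_ofReal
        apply Measurable.mul _ hv
        exact (coYoung_mono hφ₂mono hφ₂top).measurable.comp
          (measurable_const.div (((measurable_const.mul hu).mul hv)))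
      have hT2 : ENNReal.ofReal (2*αr/lam) * G x ≤ α + R := by
        have e1 : ENNReal.ofReal (2*αr/lam) * G x
            = ∫⁻ y in Ioo (0:ℝ) x, ENNReal.ofReal ((2*αr/lam) * f y) := by
          rw [hG, ← lintegral_const_mul' _ _ ENNReal.ofReal_ne_top]
          congr 1
          funext y
          rw [← ENNReal.ofReal_mul (by positivity)]
        rw [e1]
        calc (∫⁻ y in Ioo (0:ℝ) x, ENNReal.ofReal ((2*αr/lam) * f y))
            ≤ ∫⁻ y in Ioo (0:ℝ) x,
                (ENNReal.ofReal (coYoung φ₂ (αr / (C*lam*u y*v y)) * v y) +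
                 ENNReal.ofReal (young φ₂ (2 * C * u y * f y) * v y)) := by
              apply lintegral_mono_ae
              rw [ae_restrict_iff' measurableSet_Ioo]
              exact Filter.Eventually.of_forall hpt
          _ = (∫⁻ y in Ioo (0:ℝ) x,
                ENNReal.ofReal (coYoung φ₂ (αr / (C*lam*u y*v y)) * v y)) +
              (∫⁻ y in Ioo (0:ℝ) x,
                ENNReal.ofReal (young φ₂ (2 * C * u y * f y) * v y)) :=
              lintegral_add_left hmeas1 _
          _ ≤ α + R := by
              refine add_le_add ?_ (lintegral_mono_set Ioo_subset_Ioi_self)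
              exact hΨ
      have hT1 : 2 * α ≤ ENNReal.ofReal (2*αr/lam) * G x := by
        have e2 : 2 * α = ENNReal.ofReal (2*αr/lam) * ENNReal.ofReal lam := by
          rw [← ENNReal.ofReal_mul (by positivity), div_mul_cancel₀ _ (ne_of_gt hlam),
            ENNReal.ofReal_mul (by norm_num), ENNReal.ofReal_toReal hαtop]
          norm_num
        rw [e2]
        exact mul_le_mul_right hxG.le _
      have : α + α ≤ α + R := by
        calc α + α = 2 * α := (two_mul α).symm
          _ ≤ _ := le_trans hT1 hT2
      exact (ENNReal.add_le_add_iff_left hαtop).mp this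
    -- reduce to claimA via sInf / union argument
    set P := {x : ℝ | x ∈ Ioi (0:ℝ) ∧ ENNReal.ofReal lam < G x} with hP
    rcases Set.eq_empty_or_nonempty P with hPe | ⟨p, hp⟩
    · rw [hPe]
      simp only [Measure.restrict_empty, lintegral_zero_measure]
      exact zero_le
    have hbdd : BddBelow P := ⟨0, fun q hq => (le_of_lt hq.1)⟩
    set x₀ := sInf P with hx₀
    have hx₀nn : 0 ≤ x₀ := le_csInf ⟨p, hp⟩ (fun q hq => (le_of_lt hq.1))
    have hupward : ∀ q ∈ P, ∀ r, q ≤ r → r ∈ P := by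
      intro q hq r hqr
      refine ⟨lt_of_lt_of_le hq.1 hqr, lt_of_lt_of_le hq.2 ?_⟩
      exact lintegral_mono_set (Ioo_subset_Ioo_right hqr)
    set xs : ℕ → ℝ := fun n => x₀ + 1/(n+1) with hxs
    have hxspos : ∀ n : ℕ, (0:ℝ) < 1/(n+1) := by
      intro n; positivity
    have hxsP : ∀ n, xs n ∈ P := by
      intro n
      have h1 : x₀ < xs n := lt_add_of_pos_right _ (hxspos n)
      obtain ⟨q, hq, hql⟩ := (csInf_lt_iff hbdd ⟨p, hp⟩).mp h1
      exact hupward q hq (xs n) hql.le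
    set Φh : ℝ → ℝ := fun r => if 0 < r then Φ₁ r else 0 with hΦh
    have hΦhmono : Monotone Φh := by
      intro r₁ r₂ h
      simp only [hΦh]
      split_ifs with h1 h2 h2
      · exact hΦ₁mono h1 h2 h
      · exact absurd (lt_of_lt_of_le h1 h) h2
      · exact hΦ₁nn r₂
      · exact le_refl 0
    set gh : ℝ → ℝ≥0∞ := fun z => ENNReal.ofReal (Φh (lam * w z) * t z) with hgh
    have hghm : Measurable gh :=
      ((hΦhmono.measurable.comp (measurable_const.mul hw)).mul ht).ennreal_ofReal
    have hgeq : ∀ z : ℝ, 0 < z → g z = gh z := by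
      intro z hz
      have hwz := (hpos z hz).2.2.2
      have : (0:ℝ) < lam * w z := by positivity
      simp only [hgdef, hgh, hΦh, if_pos this]
    have hae0 : ∀ᵐ z : ℝ ∂volume, z ≠ 0 := by
      refine (ae_iff).mpr ?_
      simpa using Real.volume_singleton (x := 0) |>.symm ▸ (by simp : volume ({0}:Set ℝ) = 0)
    have hUnion : Ioi x₀ = ⋃ n, Ioi (xs n) := by
      ext z
      simp only [mem_Ioi, mem_iUnion]
      constructor
      · intro hz
        obtain ⟨n, hn⟩ := exists_nat_one_div_lt (sub_pos.mpr hz)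
        exact ⟨n, by simp only [hxs]; linarith⟩
      · rintro ⟨n, hn⟩
        have := hxspos n
        simp only [hxs] at hn
        linarith
    have hdir : Directed (· ⊆ ·) (fun n : ℕ => Ioi (xs n)) := by
      apply Monotone.directed_le
      intro n m hnm
      apply Ioi_subset_Ioi
      simp only [hxs]
      have : (1:ℝ)/(m+1) ≤ 1/(n+1) := by
        apply one_div_le_one_div_of_le (by positivity)
        exact_mod_cast add_le_add_left (Nat.cast_le.mpr hnm) 1
      linarith
    calc (∫⁻ z in P, g z) ≤ ∫⁻ z in Ici x₀, g z :=
          lintegral_mono_set (fun q hq => csInf_le hbdd hq)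
      _ = ∫⁻ z in Ici x₀, gh z := by
          apply lintegral_congr_ae
          refine (ae_restrict_iff' measurableSet_Ici).mpr ?_
          filter_upwards [hae0] with z hz0 hz
          have hzpos : 0 < z := lt_of_le_of_ne (le_trans hx₀nn hz) (Ne.symm hz0)
          exact hgeq z hzpos
      _ = ∫⁻ z in Ioi x₀, gh z := by
          rw [← Measure.restrict_congr_set Ioi_ae_eq_Ici]
      _ = volume.withDensity gh (Ioi x₀) := (withDensity_apply gh measurableSet_Ioi).symm
      _ = volume.withDensity gh (⋃ n, Ioi (xs n)) := by rw [hUnion]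
      _ = ⨆ n, volume.withDensity gh (Ioi (xs n)) := hdir.measure_iUnion
      _ = ⨆ n, ∫⁻ z in Ioi (xs n), gh z := by
          simp only [withDensity_apply _ measurableSet_Ioi]
      _ = ⨆ n, ∫⁻ z in Ioi (xs n), g z := by
          congr 1
          funext n
          apply lintegral_congr_ae
          refine (ae_restrict_iff' measurableSet_Ioi).mpr ?_
          refine Filter.Eventually.of_forall fun z hz => ?_
          have hzpos : 0 < z := lt_trans (lt_of_le_of_lt hx₀nn (lt_add_of_pos_right _ (hxspos n))) hz
          exact (hgeq z hzpos).symm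
      _ ≤ R := iSup_le fun n => claimA (xs n) (hxsP n).1 (hxsP n).2
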